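/- If q < a < q^{-1}, then ∑_{n=0}^∞ ( P_n(a,q;0)² + Q_n(a,q;0)² ) < ∞, where P_n(a,q;0) = (-1)^n (q/a)^{n/2} (1-a^{n+1})/(1-a) and Q_n(a,q;0) = (-1)^{n+1} (q/a)^{n/2} (1-a^n)/(1-a) for a ≠ 1, and P_n(1,q;0) = (-1)^n q^{n/2}(n+1), Q_n(1,q;0) = (-1)^{n+1} q^{n/2} n. Conversely, if a ≤ q or a ≥ q^{-1}, the series diverges. -/

import Mathlib

open Real

private lemma sq_rpow_half (x : ℝ) (hx : 0 ≤ x) (n : ℕ) :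
    (x ^ ((n : ℝ) / 2)) ^ 2 = x ^ n := by
  rw [← Real.rpow_natCast (x ^ ((n : ℝ) / 2)) 2, ← Real.rpow_mul hx]
  have h : (n : ℝ) / 2 * (2 : ℕ) = (n : ℝ) := by push_cast; ring
  rw [h, Real.rpow_natCast]

private lemma not_summable_of_const_le (f : ℕ → ℝ) (c : ℝ) (hc : 0 < c)
    (h : ∀ n, c ≤ f n) : ¬ Summable f := by
  intro hs
  obtain ⟨n, hn⟩ := (hs.tendsto_atTop_zero.eventually_lt_const hc).exists
  exact absurd (h n) (not_le.mpr hn)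

private lemma neg_one_pow_sq (n : ℕ) : ((-1 : ℝ) ^ n) ^ 2 = 1 := by
  rw [← pow_mul, mul_comm, pow_mul, neg_one_sq, one_pow]

set_option maxHeartbeats 1600000

/-- Convergence criterion for indeterminacy: `∑ (Pₙ(0)² + Qₙ(0)²) < ∞` iff
`q < a < q⁻¹`. -/
theorem stmt8 (a q : ℝ) (ha : 0 < a) (hq0 : 0 < q) (hq1 : q < 1)
    (P Q : ℕ → ℝ)
    (hP : ∀ n : ℕ, P n = if a = 1 then (-1) ^ n * q ^ ((n : ℝ) / 2) * (n + 1)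
      else (-1) ^ n * (q / a) ^ ((n : ℝ) / 2) * (1 - a ^ (n + 1)) / (1 - a))
    (hQ : ∀ n : ℕ, Q n = if a = 1 then (-1) ^ (n + 1) * q ^ ((n : ℝ) / 2) * n
      else (-1) ^ (n + 1) * (q / a) ^ ((n : ℝ) / 2) * (1 - a ^ n) / (1 - a)) :
    Summable (fun n : ℕ => P n ^ 2 + Q n ^ 2) ↔ (q < a ∧ a < q⁻¹) := by
  have hinv : (1 : ℝ) < q⁻¹ := by
    rw [← one_div, lt_div_iff₀ hq0, one_mul]; exact hq1
  by_cases ha1 : a = 1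
  · subst ha1
    have hkey : ∀ n : ℕ, P n ^ 2 + Q n ^ 2 = q ^ n * (((n : ℝ) + 1) ^ 2 + (n : ℝ) ^ 2) := by
      intro n
      rw [hP n, hQ n, if_pos rfl, if_pos rfl]
      rw [mul_pow, mul_pow, mul_pow, mul_pow, neg_one_pow_sq, neg_one_pow_sq,
        sq_rpow_half q hq0.le]
      ring
    constructor
    · intro _; exact ⟨hq1, hinv⟩
    · intro _
      have hA : Summable (fun n : ℕ => (n : ℝ) ^ 2 * q ^ n) :=
        summable_pow_mul_geometric_of_norm_lt_one 2
          (by rw [Real.norm_eq_abs, abs_of_pos hq0]; exact hq1)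
      have hB : Summable (fun n : ℕ => q ^ n) := summable_geometric_of_lt_one hq0.le hq1
      have hC : Summable (fun n : ℕ => 3 * ((n : ℝ) ^ 2 * q ^ n) + 2 * q ^ n) :=
        (hA.mul_left 3).add (hB.mul_left 2)
      refine Summable.of_nonneg_of_le (fun n => by positivity) (fun n => ?_) hC
      rw [hkey n]
      have hqn : (0 : ℝ) ≤ q ^ n := by positivity
      nlinarith [sq_nonneg ((n : ℝ) - 1), sq_nonneg (n : ℝ)]
  · -- a ≠ 1 case
    have ha0 : a ≠ 0 := ha.ne'
    have hd : (1 - a) ^ 2 ≠ 0 := by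
      intro h
      exact ha1 (by nlinarith [sq_nonneg (1 - a)])
    have hr0 : (0 : ℝ) ≤ q / a := by positivity
    set G : ℕ → ℝ := fun n => (q / a) ^ n * ((1 - a ^ (n + 1)) ^ 2 + (1 - a ^ n) ^ 2) with hG
    have hkey : ∀ n : ℕ, P n ^ 2 + Q n ^ 2 = G n / (1 - a) ^ 2 := by
      intro n
      rw [hP n, hQ n, if_neg ha1, if_neg ha1, hG]
      simp only [div_pow, mul_pow, neg_one_pow_sq, sq_rpow_half (q / a) hr0, one_mul]
      ring
    have hiff : Summable (fun n : ℕ => P n ^ 2 + Q n ^ 2) ↔ Summable G := by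
      constructor
      · intro h
        have h2 := h.mul_right ((1 - a) ^ 2)
        refine h2.congr fun n => ?_
        rw [hkey n, div_mul_cancel₀ _ hd]
      · intro h
        have h2 := h.div_const ((1 - a) ^ 2)
        exact h2.congr fun n => (hkey n).symm
    rw [hiff]
    rcases lt_or_gt_of_ne ha1 with hlt | hgt
    · -- a < 1
      have hauto : a < q⁻¹ := hlt.trans hinv
      constructor
      · intro hs
        refine ⟨?_, hauto⟩
        by_contra hqa
        push_neg at hqa  -- a ≤ q
        have hge1 : (1 : ℝ) ≤ q / a := (one_le_div ha).mpr hqa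
        refine not_summable_of_const_le G ((1 - a) ^ 2)
          (pow_pos (sub_pos.mpr hlt) 2) (fun n => ?_) hs
        have h1 : a ^ (n + 1) ≤ a := by
          calc a ^ (n + 1) ≤ a ^ 1 := pow_le_pow_of_le_one ha.le hlt.le (by omega)
          _ = a := pow_one a
        have h2 : (1 - a) ^ 2 ≤ (1 - a ^ (n + 1)) ^ 2 := by nlinarith [sub_pos.mpr hlt]
        have h3 : (1 : ℝ) ≤ (q / a) ^ n := one_le_pow₀ hge1
        have h4 : (0 : ℝ) ≤ (1 - a ^ n) ^ 2 := sq_nonneg _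
        have hrn : (0 : ℝ) ≤ (q / a) ^ n := by positivity
        simp only [hG]
        nlinarith [mul_le_mul h3 h2 (sq_nonneg (1 - a)) hrn, mul_nonneg hrn h4]
      · rintro ⟨hqa, -⟩
        have hr1 : q / a < 1 := (div_lt_one ha).mpr hqa
        have hgeo : Summable (fun n : ℕ => 2 * (q / a) ^ n) :=
          (summable_geometric_of_lt_one hr0 hr1).mul_left 2
        refine Summable.of_nonneg_of_le (fun n => by positivity) (fun n => ?_) hgeo
        have hb1 : (0 : ℝ) < a ^ (n + 1) := by positivity
        have hb2 : a ^ (n + 1) ≤ 1 := pow_le_one₀ ha.le hlt.le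
        have hb3 : (0 : ℝ) < a ^ n := by positivity
        have hb4 : a ^ n ≤ 1 := pow_le_one₀ ha.le hlt.le
        have hrn : (0 : ℝ) ≤ (q / a) ^ n := by positivity
        have hA : (1 - a ^ (n + 1)) ^ 2 ≤ 1 := by nlinarith
        have hB : (1 - a ^ n) ^ 2 ≤ 1 := by nlinarith
        simp only [hG]
        calc (q / a) ^ n * ((1 - a ^ (n + 1)) ^ 2 + (1 - a ^ n) ^ 2)
            ≤ (q / a) ^ n * 2 := mul_le_mul_of_nonneg_left (by linarith) hrn
          _ = 2 * (q / a) ^ n := by ring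
    · -- a > 1
      have hauto : q < a := hq1.trans hgt
      have hinva : a < q⁻¹ ↔ a * q < 1 := by
        rw [← one_div, lt_div_iff₀ hq0]
      constructor
      · intro hs
        refine ⟨hauto, ?_⟩
        rw [hinva]
        by_contra hqa
        push_neg at hqa  -- 1 ≤ a * q
        refine not_summable_of_const_le G ((a - 1) ^ 2)
          (pow_pos (sub_pos.mpr hgt) 2) (fun n => ?_) hs
        have hone : (1 : ℝ) ≤ a ^ n := one_le_pow₀ hgt.le
        have h1 : a ^ n * (a - 1) ≤ a ^ (n + 1) - 1 := by
          rw [pow_succ]; nlinarith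
        have h2 : (a ^ n * (a - 1)) ^ 2 ≤ (a ^ (n + 1) - 1) ^ 2 := by
          apply pow_le_pow_left₀ (by nlinarith) h1
        have h3 : (q / a) ^ n * (a ^ n * (a - 1)) ^ 2 = (q * a) ^ n * (a - 1) ^ 2 := by
          rw [div_pow, mul_pow, mul_pow]
          field_simp
        have h4 : (1 : ℝ) ≤ (q * a) ^ n := one_le_pow₀ (by nlinarith)
        have h5 : (1 - a ^ (n + 1)) ^ 2 = (a ^ (n + 1) - 1) ^ 2 := by ring
        have hrn : (0 : ℝ) ≤ (q / a) ^ n := by positivity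
        have hg : (a - 1) ^ 2 ≤ (q / a) ^ n * (a ^ (n + 1) - 1) ^ 2 := by
          calc (a - 1) ^ 2 ≤ (q * a) ^ n * (a - 1) ^ 2 := by nlinarith [sq_nonneg (a - 1)]
          _ = (q / a) ^ n * (a ^ n * (a - 1)) ^ 2 := h3.symm
          _ ≤ (q / a) ^ n * (a ^ (n + 1) - 1) ^ 2 := by nlinarith
        rw [hG]
        simp only
        rw [h5]
        nlinarith [sq_nonneg (1 - a ^ n)]
      · rintro ⟨-, hqa⟩
        rw [hinva] at hqa
        have hqa0 : (0 : ℝ) ≤ q * a := by positivity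
        have hqa1 : q * a < 1 := by nlinarith
        have hgeo : Summable (fun n : ℕ => (a ^ 2 + 1) * (q * a) ^ n) :=
          (summable_geometric_of_lt_one hqa0 hqa1).mul_left _
        refine Summable.of_nonneg_of_le (fun n => by positivity) (fun n => ?_) hgeo
        have hone1 : (1 : ℝ) ≤ a ^ (n + 1) := one_le_pow₀ hgt.le
        have hone2 : (1 : ℝ) ≤ a ^ n := one_le_pow₀ hgt.le
        have key : ∀ x : ℝ, 1 ≤ x → (1 - x) ^ 2 ≤ x ^ 2 := by
          intro x hx; nlinarith
        have h1 : (1 - a ^ (n + 1)) ^ 2 ≤ (a ^ (n + 1)) ^ 2 := key _ hone1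
        have h2 : (1 - a ^ n) ^ 2 ≤ (a ^ n) ^ 2 := key _ hone2
        have e1 : (a ^ (n + 1)) ^ 2 = a ^ n * a ^ n * a ^ 2 := by
          rw [← pow_mul, ← pow_add, ← pow_add]
          congr 1
          omega
        have e2 : (a ^ n) ^ 2 = a ^ n * a ^ n := by rw [pow_two]
        have hcore : (q / a) ^ n * a ^ n = q ^ n := by
          rw [← mul_pow, div_mul_cancel₀ q ha0]
        have h3 : (q / a) ^ n * (a ^ (n + 1)) ^ 2 = (q * a) ^ n * a ^ 2 := by
          rw [e1, mul_pow q a]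
          linear_combination (a ^ n * a ^ 2) * hcore
        have h4 : (q / a) ^ n * (a ^ n) ^ 2 = (q * a) ^ n := by
          rw [e2, mul_pow q a]
          linear_combination a ^ n * hcore
        have hrn : (0 : ℝ) ≤ (q / a) ^ n := by positivity
        simp only [hG]
        calc (q / a) ^ n * ((1 - a ^ (n + 1)) ^ 2 + (1 - a ^ n) ^ 2)
            ≤ (q / a) ^ n * ((a ^ (n + 1)) ^ 2 + (a ^ n) ^ 2) :=
              mul_le_mul_of_nonneg_left (add_le_add h1 h2) hrn
          _ = (q * a) ^ n * a ^ 2 + (q * a) ^ n := by rw [mul_add, h3, h4]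
          _ = (a ^ 2 + 1) * (q * a) ^ n := by ring
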